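/- Every 2-dimensional smooth Fano polytope has at most 6 vertices. -/

import Mathlib

/-- Real vector associated to an integer lattice vector. -/
def toR3 (v : Fin 2 → ℤ) : Fin 2 → ℝ := fun i => (v i : ℝ)

/-- A point of `ℝ²` is a lattice point when all its coordinates are integers. -/
def IsLatticePoint3 (x : Fin 2 → ℝ) : Prop := ∀ i, ∃ z : ℤ, x i = (z : ℝ)

/-- The dual polytope `{y : ⟨x,y⟩ ≥ -1 for all x ∈ A}`. -/
def dualPolytope3 (A : Set (Fin 2 → ℝ)) : Set (Fin 2 → ℝ) :=
  {y | ∀ x ∈ A, -1 ≤ ∑ i, x i * y i}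

/-- Two integer vectors form a `ℤ`-basis of `ℤ²`. -/
def IsZBasis3 (u v : Fin 2 → ℤ) : Prop :=
  LinearIndependent ℤ ![u, v] ∧ Submodule.span ℤ {u, v} = ⊤

namespace SF

abbrev Z2 := Fin 2 → ℤ
abbrev R2 := Fin 2 → ℝ

/-- integer 2x2 determinant -/
def D (x y : Z2) : ℤ := x 0 * y 1 - x 1 * y 0
/-- real 2x2 determinant -/
def Dr (x y : R2) : ℝ := x 0 * y 1 - x 1 * y 0

lemma D_cast (x y : Z2) : (D x y : ℝ) = Dr (toR3 x) (toR3 y) := by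
  simp [D, Dr, toR3]

lemma cramer (x y z : Z2) : D x y • z = D z y • x + D x z • y := by
  funext i
  fin_cases i <;> simp [D, Pi.smul_apply, Pi.add_apply, smul_eq_mul] <;> ring

lemma cramerR (x y z : R2) : Dr x y • z = Dr z y • x + Dr x z • y := by
  funext i
  fin_cases i <;> simp [Dr, Pi.smul_apply, Pi.add_apply, smul_eq_mul] <;> ring

lemma D_antisymm (x y : Z2) : D x y = - D y x := by simp [D]; ring
lemma D_self (x : Z2) : D x x = 0 := by simp [D]; ring
lemma D_add_right (x y z : Z2) : D x (y + z) = D x y + D x z := by simp [D]; ring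
lemma D_sub_right (x y z : Z2) : D x (y - z) = D x y - D x z := by simp [D]; ring
lemma D_sub_left (x y z : Z2) : D (x - y) z = D x z - D y z := by simp [D]; ring
lemma D_smul_right (a : ℤ) (x y : Z2) : D x (a • y) = a * D x y := by
  simp [D, Pi.smul_apply, smul_eq_mul]; ring
lemma D_smul_left (a : ℤ) (x y : Z2) : D (a • x) y = a * D x y := by
  simp [D, Pi.smul_apply, smul_eq_mul]; ring
lemma D_zero_left (y : Z2) : D 0 y = 0 := by simp [D]
lemma D_zero_right (y : Z2) : D y 0 = 0 := by simp [D]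

lemma toR3_add (x y : Z2) : toR3 (x + y) = toR3 x + toR3 y := by
  funext i; simp [toR3]
lemma toR3_sub (x y : Z2) : toR3 (x - y) = toR3 x - toR3 y := by
  funext i; simp [toR3]
lemma toR3_smul (a : ℤ) (x : Z2) : toR3 (a • x) = (a : ℝ) • toR3 x := by
  funext i; simp [toR3]
lemma toR3_zero : toR3 0 = 0 := by funext i; simp [toR3]
lemma toR3_inj : Function.Injective toR3 := by
  intro x y h
  funext i
  have := congrFun h i
  simpa [toR3] using this

/-- z ≠ 0 if it is part of a unimodular pair -/
lemma ne_zero_of_D_one_left {x y : Z2} (h : D x y = 1) : x ≠ 0 := by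
  rintro rfl; simp [D_zero_left] at h
lemma ne_zero_of_D_one_right {x y : Z2} (h : D x y = 1) : y ≠ 0 := by
  rintro rfl; simp [D_zero_right] at h

/-- if D x y = 1 and D x w = 0 then w is an integer multiple of x -/
lemma multiple_of_D_zero {x y w : Z2} (h1 : D x y = 1) (h0 : D x w = 0) :
    w = D w y • x := by
  have := cramer x y w
  rw [h1, h0] at this
  simpa using this

/-- complexification -/
noncomputable def cx (x : R2) : ℂ := ⟨x 0, x 1⟩

lemma cx_re (x : R2) : (cx x).re = x 0 := rfl
lemma cx_im (x : R2) : (cx x).im = x 1 := rfl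
lemma cx_eq_zero {x : R2} : cx x = 0 ↔ x = 0 := by
  constructor
  · intro h
    funext i
    have hre := congrArg Complex.re h
    have him := congrArg Complex.im h
    fin_cases i <;> simpa [cx] using (by first | exact hre | exact him)
  · rintro rfl; simp [cx, Complex.ext_iff]

noncomputable def arg2 (x : R2) : ℝ := (cx x).arg

/-- the key determinant-angle formula -/
lemma Dr_eq_sin (x y : R2) :
    Dr x y = ‖(cx x)‖ * ‖(cx y)‖ * Real.sin (arg2 y - arg2 x) := by
  have hx1 : ‖(cx x)‖ * Real.cos (arg2 x) = x 0 := Complex.norm_mul_cos_arg (cx x)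
  have hx2 : ‖(cx x)‖ * Real.sin (arg2 x) = x 1 := Complex.norm_mul_sin_arg (cx x)
  have hy1 : ‖(cx y)‖ * Real.cos (arg2 y) = y 0 := Complex.norm_mul_cos_arg (cx y)
  have hy2 : ‖(cx y)‖ * Real.sin (arg2 y) = y 1 := Complex.norm_mul_sin_arg (cx y)
  rw [Real.sin_sub, Dr, ← hx1, ← hx2, ← hy1, ← hy2]
  ring

lemma sin_nonpos_of_pi_le {t : ℝ} (h1 : Real.pi ≤ t) (h2 : t < 2 * Real.pi) :
    Real.sin t ≤ 0 := by
  have : Real.sin (t - Real.pi) ≥ 0 := by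
    apply Real.sin_nonneg_of_nonneg_of_le_pi <;> nlinarith [Real.pi_pos]
  have := Real.sin_pi_sub (t - Real.pi)  -- sin(π - (t-π)) = sin(t-π)
  nlinarith [Real.sin_pi_sub (t - Real.pi), Real.sin_sub_pi t, Real.sin_nonneg_of_nonneg_of_le_pi (by nlinarith [Real.pi_pos] : (0:ℝ) ≤ t - Real.pi) (by nlinarith : t - Real.pi ≤ Real.pi)]

lemma sin_pos_of_that {t : ℝ} (h1 : 0 < t) (h2 : t < Real.pi) : 0 < Real.sin t :=
  Real.sin_pos_of_pos_of_lt_pi h1 h2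


lemma Ico_succ_top {a b : ℤ} (h : a ≤ b) :
    Finset.Ico a (b+1) = insert b (Finset.Ico a b) := by
  ext m; simp [Finset.mem_Ico]; omega

lemma sum_Ico_succ_top {M : Type*} [AddCommMonoid M] {a b : ℤ} (h : a ≤ b) (f : ℤ → M) :
    ∑ m ∈ Finset.Ico a (b+1), f m = (∑ m ∈ Finset.Ico a b, f m) + f b := by
  rw [Ico_succ_top h, Finset.sum_insert (by simp)]
  exact add_comm _ _

lemma sum_Ico_consec {M : Type*} [AddCommMonoid M] (f : ℤ → M) {a b c : ℤ}
    (hab : a ≤ b) (hbc : b ≤ c) :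
    ∑ m ∈ Finset.Ico a b, f m + ∑ m ∈ Finset.Ico b c, f m = ∑ m ∈ Finset.Ico a c, f m := by
  rw [← Finset.sum_union (by
    simp only [Finset.disjoint_left, Finset.mem_Ico]; intros; omega)]
  rw [Finset.Ico_union_Ico_eq_Ico hab hbc]

/-- telescoping sum over Int Ico -/
lemma sum_telescope_Ico (f : ℤ → ℝ) {a b : ℤ} (h : a ≤ b) :
    ∑ m ∈ Finset.Ico a b, (f (m+1) - f m) = f b - f a := by
  refine Int.le_induction (motive := fun b _ => ∑ m ∈ Finset.Ico a b, (f (m+1) - f m) = f b - f a) ?_ ?_ b h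
  · simp
  · intro b hb ih
    rw [sum_Ico_succ_top hb, ih]
    ring

/-- shifting sum over Int Ico -/
lemma sum_Ico_shift {M : Type*} [AddCommMonoid M] (f : ℤ → M) (a b c : ℤ) :
    ∑ m ∈ Finset.Ico a b, f (m + c) = ∑ m ∈ Finset.Ico (a+c) (b+c), f m := by
  apply Finset.sum_nbij' (fun m => m + c) (fun m => m - c) <;> intros <;>
    simp_all [Finset.mem_Ico] <;> omega

lemma ediv_neg_one {x n : ℤ} (h1 : -n ≤ x) (h2 : x < 0) : x / n = -1 := by
  have hn : 0 < n := by omega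
  have h := (Int.ediv_emod_unique (a := x) (b := n) (r := x + n) (q := -1) hn).mpr
    (by refine ⟨by ring_nf, by omega, by omega⟩)
  exact h.1

lemma ediv_zero' {x n : ℤ} (h1 : 0 ≤ x) (h2 : x < n) : x / n = 0 :=
  Int.ediv_eq_zero_of_lt h1 h2

lemma ediv_succ {x n : ℤ} (hn : 0 < n) :
    (x+1) / n = x / n + (if n ∣ (x+1) then 1 else 0) := by
  have h0 : 0 ≤ x % n := Int.emod_nonneg x (by omega)
  have h1 : x % n < n := Int.emod_lt_of_pos x hn
  have hx : n * (x / n) + x % n = x := Int.mul_ediv_add_emod x n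
  have hmul : n * (x / n + 1) = n * (x / n) + n := by ring
  by_cases hc : x % n = n - 1
  · have hdvd : n ∣ (x + 1) := ⟨x / n + 1, by omega⟩
    rw [if_pos hdvd]
    have h := (Int.ediv_emod_unique (a := x+1) (b := n) (r := 0) (q := x / n + 1) hn).mpr
      (by refine ⟨by omega, le_refl _, hn⟩)
    omega
  · have h := (Int.ediv_emod_unique (a := x+1) (b := n) (r := x % n + 1) (q := x / n) hn).mpr
      (by refine ⟨by omega, by omega, by omega⟩)
    have hdvd : ¬ n ∣ (x + 1) := by
      rintro ⟨c, hcc⟩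
      -- x+1 = n*c, but (x+1) % n = x%n+1 ∈ (0, n): contradiction
      have h2 : (x+1) % n = x % n + 1 := h.2
      have h3 : (n*c) % n = 0 := by simp [Int.mul_emod_right]
      rw [hcc] at h2
      omega
    rw [if_neg hdvd]
    omega

/-- unique representative in window congruent to c mod n -/
lemma window_rep_mem {t c : ℤ} {n : ℤ} (hn : 0 < n) :
    t + (c - t) % n ∈ Finset.Ico t (t + n) ∧ (n ∣ (t + (c - t) % n - c)) := by
  have h0 : 0 ≤ (c - t) % n := Int.emod_nonneg _ (by omega)
  have h1 : (c - t) % n < n := Int.emod_lt_of_pos _ hn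
  refine ⟨by simp [Finset.mem_Ico]; omega, ?_⟩
  refine ⟨-((c-t)/n), ?_⟩
  have h2 := Int.mul_ediv_add_emod (c - t) n
  have h3 : n * -((c-t)/n) = -(n * ((c-t)/n)) := by ring
  omega

lemma window_rep_unique {t c m m' : ℤ} {n : ℤ} (hn : 0 < n)
    (hm : m ∈ Finset.Ico t (t + n)) (hm' : m' ∈ Finset.Ico t (t + n))
    (hd : n ∣ (m - c)) (hd' : n ∣ (m' - c)) : m = m' := by
  simp only [Finset.mem_Ico] at hm hm'
  obtain ⟨s, hs⟩ := hd
  obtain ⟨s', hs'⟩ := hd'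
  have hd : m - m' = n * (s - s') := by
    have : n * (s - s') = n * s - n * s' := by ring
    omega
  have hb1 : -n < m - m' := by omega
  have hb2 : m - m' < n := by omega
  rw [hd] at hb1 hb2
  have hss : s - s' = 0 := by
    by_contra hne
    rcases lt_or_gt_of_ne hne with h | h
    · nlinarith
    · nlinarith
  rw [hss, mul_zero] at hd
  omega


/-! ### Periodic window toolkit -/

def em (n : ℕ) (t m : ℤ) : ℤ := t + (m - t) % n

noncomputable def ba (n : ℕ) (u : ℤ → Z2) (t m : ℤ) : ℝ :=
  arg2 (toR3 (u (em n t m))) + 2 * Real.pi * (((m - t) / n : ℤ) : ℝ)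

section Toolkit

variable {n : ℕ} {u : ℤ → Z2} {t : ℤ}

lemma uper_mul (hn : 0 < n) (hP : ∀ m, u (m + n) = u m) :
    ∀ (s : ℤ) (m : ℤ), u (m + n * s) = u m := by
  intro s
  induction s using Int.induction_on with
  | zero => simp
  | succ i ih =>
    intro m
    have : m + n * (i + 1) = (m + n * i) + n := by ring
    rw [this, hP, ih]
  | pred i ih =>
    intro m
    have h2 : m + n * (-(i:ℤ) - 1) + n = m + n * (-(i:ℤ)) := by ring
    have := hP (m + n * (-(i:ℤ) - 1))
    rw [h2] at this
    rw [← ih m, ← this]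

lemma em_mem (hn : 0 < n) : t ≤ em n t m ∧ em n t m < t + n := by
  have h0 : 0 ≤ (m - t) % n := Int.emod_nonneg _ (by positivity)
  have h1 : (m - t) % n < n := Int.emod_lt_of_pos _ (by exact_mod_cast hn)
  constructor <;> [skip; skip] <;> simp [em] <;> omega

lemma em_eq_self (hn : 0 < n) {m : ℤ} (h1 : t ≤ m) (h2 : m < t + n) : em n t m = m := by
  have : (m - t) % n = m - t := Int.emod_eq_of_lt (by omega) (by omega)
  simp [em, this]

lemma u_em (hn : 0 < n) (hP : ∀ m, u (m + n) = u m) (m : ℤ) : u (em n t m) = u m := by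
  have hq := Int.mul_ediv_add_emod (m - t) n
  have : m = em n t m + n * ((m - t) / n) := by simp [em]; omega
  conv_rhs => rw [this]
  rw [uper_mul hn hP]

lemma em_add_period (hn : 0 < n) (m : ℤ) : em n t (m + n) = em n t m := by
  simp only [em]
  have : m + n - t = (m - t) + n * 1 := by ring
  rw [this, Int.add_mul_emod_self_left]

lemma ediv_add_period (hn : 0 < n) (m : ℤ) : (m + n - t) / n = (m - t) / n + 1 := by
  have : m + n - t = (m - t) + 1 * n := by ring
  rw [this, Int.add_mul_ediv_right _ _ (by positivity : (n:ℤ) ≠ 0)]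

lemma ba_add_period (hn : 0 < n) (m : ℤ) :
    ba n u t (m + n) = ba n u t m + 2 * Real.pi := by
  simp only [ba, em_add_period hn, ediv_add_period hn]
  push_cast
  ring

section withD

variable (hn : 3 ≤ n) (hP : ∀ m, u (m + n) = u m)
  (hD : ∀ m, D (u m) (u (m+1)) = 1)
  (hS : ∀ i j, t ≤ i → i < j → j < t + (n:ℤ) → arg2 (toR3 (u i)) < arg2 (toR3 (u j)))

include hD in
lemma u_nz (m : ℤ) : toR3 (u m) ≠ 0 := by
  intro h
  have : u m = 0 := toR3_inj (by rw [h, toR3_zero])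
  exact ne_zero_of_D_one_left (hD m) this

lemma abs_cx_pos' (hNZ : ∀ m, toR3 (u m) ≠ 0) (m : ℤ) :
    0 < ‖(cx (toR3 (u m)))‖ := by
  rw [norm_pos_iff]
  rw [Ne, cx_eq_zero]
  exact hNZ m

lemma emod_dvd_succ {x : ℤ} {k : ℤ} (hk : 0 < k) (h : k ∣ (x+1)) : x % k = k - 1 := by
  obtain ⟨c, hc⟩ := h
  have := (Int.ediv_emod_unique (a := x) (b := k) (r := k - 1) (q := c - 1) hk).mpr
    (by refine ⟨by nlinarith, by omega, by omega⟩)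
  exact this.2

include hn hS in
lemma ba_lt_succ (m : ℤ) : ba n u t m < ba n u t (m + 1) := by
  have hn0 : 0 < n := by omega
  have hnz : ((n:ℤ)) ≠ 0 := by positivity
  have harg1 : ∀ x : R2, -Real.pi < arg2 x := fun x => Complex.neg_pi_lt_arg _
  have harg2 : ∀ x : R2, arg2 x ≤ Real.pi := fun x => Complex.arg_le_pi _
  have hediv : (m + 1 - t) / n = (m - t) / n + (if (n:ℤ) ∣ (m - t + 1) then 1 else 0) := by
    have : m + 1 - t = (m - t) + 1 := by ring
    rw [this, ediv_succ (by exact_mod_cast hn0)]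
  by_cases hdvd : (n:ℤ) ∣ (m - t + 1)
  · -- wrap-around case : em m = t + n - 1, em (m+1) = t
    have hrm : (m - t) % n = n - 1 := emod_dvd_succ (by exact_mod_cast hn0) hdvd
    have hr1 : (m + 1 - t) % n = 0 := by
      obtain ⟨c, hc⟩ := hdvd
      have : m + 1 - t = 0 + n * c := by omega
      rw [this, Int.add_mul_emod_self_left]
      simp
    have hem : em n t m = t + n - 1 := by simp [em, hrm]; ring
    have hem1 : em n t (m+1) = t := by simp [em, hr1]
    rw [ba, ba, hem, hem1, hediv, if_pos hdvd]
    push_cast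
    have h1 := harg1 (toR3 (u t))
    have h2 := harg2 (toR3 (u (t + (n:ℤ) - 1)))
    have hpi := Real.pi_pos
    linarith
  · have hr1 : (m + 1 - t) % n = (m - t) % n + 1 := by
      have h0 : 0 ≤ (m - t) % n := Int.emod_nonneg _ hnz
      have h1 : (m - t) % n < n := Int.emod_lt_of_pos _ (by exact_mod_cast hn0)
      have hne : (m - t) % n ≠ n - 1 := by
        intro hc
        apply hdvd
        have hq := Int.mul_ediv_add_emod (m - t) n
        exact ⟨(m - t)/n + 1, by nlinarith⟩
      have := (Int.ediv_emod_unique (a := m + 1 - t) (b := n) (r := (m - t) % n + 1)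
        (q := (m - t)/n) (by exact_mod_cast hn0)).mpr
        (by
          have hq := Int.mul_ediv_add_emod (m - t) n
          refine ⟨by omega, by omega, by omega⟩)
      exact this.2
    have hem1 : em n t (m + 1) = em n t m + 1 := by simp [em, hr1]; ring
    rw [ba, ba, hem1, hediv, if_neg hdvd]
    have hlt : arg2 (toR3 (u (em n t m))) < arg2 (toR3 (u (em n t m + 1))) := by
      have h1 := (em_mem (m := m) (t := t) hn0).1
      have h2 := (em_mem (m := m) (t := t) hn0).2
      apply hS _ _ h1 (by omega)
      -- need em m + 1 < t + n, i.e. em m < t + n - 1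
      have h0 : 0 ≤ (m - t) % n := Int.emod_nonneg _ hnz
      have h1' : (m - t) % n < n := Int.emod_lt_of_pos _ (by exact_mod_cast hn0)
      have hne : (m - t) % n ≠ n - 1 := by
        intro hc
        apply hdvd
        have hq := Int.mul_ediv_add_emod (m - t) n
        exact ⟨(m - t)/n + 1, by nlinarith⟩
      simp only [em]
      omega
    push_cast
    linarith

include hn hS in
lemma ba_strictMono : StrictMono (ba n u t) :=
  strictMono_int_of_lt_succ (ba_lt_succ hn hS)

end withD

lemma ba_sin (hn0 : 0 < n) (hP : ∀ m, u (m + n) = u m) (r s : ℤ) :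
    Dr (toR3 (u r)) (toR3 (u s)) =
      ‖(cx (toR3 (u r)))‖ * ‖(cx (toR3 (u s)))‖ *
        Real.sin (ba n u t s - ba n u t r) := by
  have hr : arg2 (toR3 (u (em n t r))) = arg2 (toR3 (u r)) := by rw [u_em hn0 hP]
  have hs : arg2 (toR3 (u (em n t s))) = arg2 (toR3 (u s)) := by rw [u_em hn0 hP]
  have key : ba n u t s - ba n u t r =
      (arg2 (toR3 (u s)) - arg2 (toR3 (u r))) + (((s - t)/n - (r - t)/n : ℤ) : ℝ) * (2 * Real.pi) := by
    simp only [ba, hr, hs]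
    push_cast
    ring
  rw [key, Real.sin_add_int_mul_two_pi, ← Dr_eq_sin]

section SignLemmas

variable (hn0 : 0 < n) (hP : ∀ m, u (m + n) = u m)
  (hNZ : ∀ m, toR3 (u m) ≠ 0)

include hn0 hP in
/-- difference of ba at two indices relates to D sign. -/
lemma D_cast_sin (r s : ℤ) :
    ((D (u r) (u s) : ℝ)) =
      ‖(cx (toR3 (u r)))‖ * ‖(cx (toR3 (u s)))‖ *
        Real.sin (ba n u t s - ba n u t r) := by
  rw [D_cast]; exact ba_sin hn0 hP r s

include hn0 hP hNZ in
lemma pi_le_of_D_nonpos {r s : ℤ} (h : D (u r) (u s) ≤ 0)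
    (h1 : 0 < ba n u t s - ba n u t r) (h2 : ba n u t s - ba n u t r < 2 * Real.pi) :
    Real.pi ≤ ba n u t s - ba n u t r := by
  by_contra hc
  push_neg at hc
  have hsin : 0 < Real.sin (ba n u t s - ba n u t r) := Real.sin_pos_of_pos_of_lt_pi h1 hc
  have hA := abs_cx_pos' hNZ r
  have hB := abs_cx_pos' hNZ s
  have hcast := D_cast_sin (t := t) hn0 hP r s
  have hprod := mul_pos (mul_pos hA hB) hsin
  have hle : ((D (u r) (u s) : ℝ)) ≤ 0 := by exact_mod_cast h
  linarith

include hn0 hP hNZ in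
lemma le_pi_of_D_nonneg {r s : ℤ} (h : 0 ≤ D (u r) (u s))
    (h2 : ba n u t s - ba n u t r < 2 * Real.pi) :
    ba n u t s - ba n u t r ≤ Real.pi := by
  by_contra hc
  push_neg at hc
  have hsin : Real.sin (ba n u t s - ba n u t r) < 0 := by
    have h3 : Real.sin ((ba n u t s - ba n u t r) - Real.pi) > 0 :=
      Real.sin_pos_of_pos_of_lt_pi (by linarith) (by linarith)
    have := Real.sin_sub_pi (ba n u t s - ba n u t r)
    linarith
  have hA := abs_cx_pos' hNZ r
  have hB := abs_cx_pos' hNZ s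
  have hcast := D_cast_sin (t := t) hn0 hP r s
  have hprod := mul_neg_of_pos_of_neg (mul_pos hA hB) hsin
  have hle : (0:ℝ) ≤ ((D (u r) (u s) : ℝ)) := by exact_mod_cast h
  linarith

include hn0 hP hNZ in
lemma D_pos_of_lt_pi {r s : ℤ} (h1 : 0 < ba n u t s - ba n u t r)
    (h2 : ba n u t s - ba n u t r < Real.pi) :
    0 < D (u r) (u s) := by
  have hsin : 0 < Real.sin (ba n u t s - ba n u t r) := Real.sin_pos_of_pos_of_lt_pi h1 h2
  have hA := abs_cx_pos' hNZ r
  have hB := abs_cx_pos' hNZ s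
  have hcast := D_cast_sin (t := t) hn0 hP r s
  have hprod := mul_pos (mul_pos hA hB) hsin
  have : (0:ℝ) < ((D (u r) (u s) : ℝ)) := by linarith
  exact_mod_cast this

end SignLemmas

/-- values of u at two indices are equal iff windows representatives coincide -/
lemma u_inj (hn0 : 0 < n) (hP : ∀ m, u (m + n) = u m)
    (hS : ∀ i j, t ≤ i → i < j → j < t + (n:ℤ) → arg2 (toR3 (u i)) < arg2 (toR3 (u j)))
    {i j : ℤ} (h : u i = u j) : em n t i = em n t j := by
  by_contra hne
  have hargs : arg2 (toR3 (u (em n t i))) = arg2 (toR3 (u (em n t j))) := by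
    rw [u_em hn0 hP, u_em hn0 hP, h]
  have hi := em_mem (m := i) (t := t) hn0
  have hj := em_mem (m := j) (t := t) hn0
  rcases lt_or_gt_of_ne hne with hlt | hlt
  · exact absurd hargs (ne_of_lt (hS _ _ hi.1 hlt hj.2))
  · exact absurd hargs.symm (ne_of_lt (hS _ _ hj.1 hlt hi.2))

end Toolkit

/-! ### The second difference sequence -/

def aseq (u : ℤ → Z2) (k : ℤ) : ℤ := D (u (k-1)) (u (k+1))

lemma D_add_left (x y z : Z2) : D (x + y) z = D x z + D y z := by simp [D]; ring

section ASeq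

variable {n : ℕ} {u : ℤ → Z2} {t : ℤ}

lemma aseq_per_mul (hn0 : 0 < n) (hP : ∀ m, u (m + n) = u m) (s k : ℤ) :
    aseq u (k + n * s) = aseq u k := by
  unfold aseq
  have h1 : k + n * s - 1 = (k - 1) + n * s := by ring
  have h2 : k + n * s + 1 = (k + 1) + n * s := by ring
  rw [h1, h2, uper_mul hn0 hP, uper_mul hn0 hP]

lemma aRel (hD : ∀ m, D (u m) (u (m+1)) = 1) (k : ℤ) :
    u (k-1) + u (k+1) = aseq u k • u k := by
  have h1 : D (u k) (u (k+1)) = 1 := hD k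
  have hm : D (u (k-1)) (u k) = 1 := by
    have := hD (k-1)
    have he : k - 1 + 1 = k := by ring
    rwa [he] at this
  have h0 : D (u k) (u (k-1) + u (k+1)) = 0 := by
    rw [D_add_right, h1]
    rw [D_antisymm (u k) (u (k-1)), hm]
    ring
  have := multiple_of_D_zero h1 h0
  rw [this]
  congr 1
  rw [D_add_left, D_self, aseq]
  ring

lemma u_eq_dvd (hn0 : 0 < n) (hP : ∀ m, u (m + n) = u m)
    (hS : ∀ i j, t ≤ i → i < j → j < t + (n:ℤ) → arg2 (toR3 (u i)) < arg2 (toR3 (u j)))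
    {i j : ℤ} (h : u i = u j) : (n:ℤ) ∣ (i - j) := by
  have hem := u_inj hn0 hP hS h
  have hdi : (n:ℤ) ∣ (em n t i - i) := by
    refine ⟨-((i - t)/n), ?_⟩
    have h2 := Int.mul_ediv_add_emod (i - t) n
    have h3 : (n:ℤ) * -((i-t)/n) = -((n:ℤ) * ((i-t)/n)) := by ring
    simp only [em]
    omega
  have hdj : (n:ℤ) ∣ (em n t j - j) := by
    refine ⟨-((j - t)/n), ?_⟩
    have h2 := Int.mul_ediv_add_emod (j - t) n
    have h3 : (n:ℤ) * -((j-t)/n) = -((n:ℤ) * ((j-t)/n)) := by ring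
    simp only [em]
    omega
  have : i - j = (em n t j - j) - (em n t i - i) := by omega
  rw [this]
  exact dvd_sub hdj hdi

lemma a_le_one (hn : 3 ≤ n) (hP : ∀ m, u (m + n) = u m)
    (hD : ∀ m, D (u m) (u (m+1)) = 1)
    (hS : ∀ i j, t ≤ i → i < j → j < t + (n:ℤ) → arg2 (toR3 (u i)) < arg2 (toR3 (u j)))
    (hV : ∀ k, ∃ f : R2 →L[ℝ] ℝ, 0 < f (toR3 (u k)) ∧
      ∀ m, u m = u k ∨ f (toR3 (u m)) < f (toR3 (u k)))
    (k : ℤ) : aseq u k ≤ 1 := by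
  have hn0 : 0 < n := by omega
  obtain ⟨f, hf0, hfm⟩ := hV k
  have hne : ∀ j : ℤ, j ≠ k → -(n:ℤ) < j - k → j - k < n → u j ≠ u k := by
    intro j hj h1 h2 hc
    obtain ⟨s, hs⟩ := u_eq_dvd (t := t) hn0 hP hS hc
    rcases lt_trichotomy s 0 with h | h | h
    · have h4 : (n:ℤ) * s ≤ -(n:ℤ) := by nlinarith
      linarith
    · rw [h, mul_zero] at hs
      omega
    · have h4 : (n:ℤ) ≤ (n:ℤ) * s := by nlinarith
      linarith
  have hf1 : f (toR3 (u (k-1))) < f (toR3 (u k)) :=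
    (hfm (k-1)).resolve_left (hne (k-1) (by omega) (by omega) (by omega))
  have hf2 : f (toR3 (u (k+1))) < f (toR3 (u k)) :=
    (hfm (k+1)).resolve_left (hne (k+1) (by omega) (by omega) (by omega))
  have hrel := aRel hD k
  have hcast : f (toR3 (u (k-1))) + f (toR3 (u (k+1))) =
      (aseq u k : ℝ) * f (toR3 (u k)) := by
    have h1 : toR3 (u (k-1) + u (k+1)) = toR3 (u (k-1)) + toR3 (u (k+1)) := toR3_add _ _
    have h2 : toR3 (aseq u k • u k) = (aseq u k : ℝ) • toR3 (u k) := toR3_smul _ _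
    calc f (toR3 (u (k-1))) + f (toR3 (u (k+1)))
        = f (toR3 (u (k-1)) + toR3 (u (k+1))) := (map_add f _ _).symm
      _ = f (toR3 (u (k-1) + u (k+1))) := by rw [h1]
      _ = f (toR3 (aseq u k • u k)) := by rw [hrel]
      _ = f ((aseq u k : ℝ) • toR3 (u k)) := by rw [h2]
      _ = (aseq u k : ℝ) * f (toR3 (u k)) := by rw [map_smul, smul_eq_mul]
  have hlt : (aseq u k : ℝ) * f (toR3 (u k)) < 2 * f (toR3 (u k)) := by linarith
  have h2 : (aseq u k : ℝ) < 2 := by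
    by_contra hcon
    push_neg at hcon
    nlinarith
  have : aseq u k < 2 := by exact_mod_cast h2
  omega

lemma a_eq_neg_one_of_three (hP : ∀ m, u (m + (3:ℕ)) = u m)
    (hD : ∀ m, D (u m) (u (m+1)) = 1) (k : ℤ) : aseq u k = -1 := by
  set x := u (k-1)
  set y := u k
  set z := u (k+1)
  have hxy : D x y = 1 := by
    have := hD (k-1); have he : k - 1 + 1 = k := by ring
    rwa [he] at this
  have hyz : D y z = 1 := hD k
  have hper : u (k + 1 + 1) = u (k - 1) := by
    have h := hP (k - 1)
    have he : k - 1 + ((3:ℕ):ℤ) = k + 1 + 1 := by push_cast; ring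
    rw [he] at h
    exact h
  have hzx : D z x = 1 := by
    have h := hD (k+1)
    rwa [hper] at h
  have hcr := cramer x y z
  rw [hxy, one_smul] at hcr
  have hcomp : D z x = D x z * D y x := by
    conv_lhs => rw [hcr]
    rw [D_add_left, D_smul_left, D_smul_left, D_self]
    ring
  have hyx : D y x = -1 := by have := D_antisymm x y; omega
  rw [hyx, hzx] at hcomp
  have : D x z = -1 := by omega
  simpa [aseq] using this

end ASeq

/-! ### The deletion map -/

def Hf (n k m : ℤ) : ℤ := m + 1 + (m - k) / n

section HfFacts

variable {n k : ℤ} (hn : 0 < n)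

include hn in
lemma Hf_low {m : ℤ} (h1 : k - n ≤ m) (h2 : m < k) : Hf n k m = m := by
  unfold Hf
  rw [ediv_neg_one (by omega) (by omega)]
  ring

include hn in
lemma Hf_high {m : ℤ} (h1 : k ≤ m) (h2 : m < k + n) : Hf n k m = m + 1 := by
  unfold Hf
  rw [ediv_zero' (by omega) (by omega)]
  ring

include hn in
lemma Hf_succ (m : ℤ) :
    Hf n k (m+1) = Hf n k m + 1 + (if n ∣ (m+1-k) then 1 else 0) := by
  unfold Hf
  have he : m + 1 - k = (m - k) + 1 := by ring
  rw [he, ediv_succ hn]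
  have he2 : (m - k) + 1 = m + 1 - k := by ring
  rw [he2]
  split_ifs <;> ring

include hn in
lemma Hf_mono : StrictMono (Hf n k) := by
  apply strictMono_int_of_lt_succ
  intro m
  rw [Hf_succ hn]
  split_ifs <;> omega

include hn in
lemma Hf_per (m : ℤ) : Hf n k (m + n) = Hf n k m + (n + 1) := by
  unfold Hf
  have he : m + n - k = (m - k) + 1 * n := by ring
  rw [he, Int.add_mul_ediv_right _ _ (by omega : n ≠ 0)]
  ring

include hn in
lemma Hf_per_mul (s : ℤ) : ∀ m, Hf n k (m + n * s) = Hf n k m + (n + 1) * s := by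
  induction s using Int.induction_on with
  | zero => simp
  | succ i ih =>
    intro m
    have he : m + n * ((i:ℤ) + 1) = (m + n * i) + n := by ring
    rw [he, Hf_per hn, ih]
    ring
  | pred i ih =>
    intro m
    have key3 := ih (m - n)
    have key4 := Hf_per (n := n) (k := k) hn (m - n)
    rw [show m - n + n = m from by ring] at key4
    have key2 : m + n * (-(i:ℤ) - 1) = (m - n) + n * (-(i:ℤ)) := by ring
    have hlin : (n+1) * (-(i:ℤ) - 1) = (n+1) * (-(i:ℤ)) - (n+1) := by ring
    rw [key2, key3]
    omega

end HfFacts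

lemma Ico_single (k : ℤ) : Finset.Ico k (k+1) = {k} := by
  ext m; simp [Finset.mem_Ico]; omega

/-! ### The core counting theorem -/

theorem core (n : ℕ) (hn : 3 ≤ n) : ∀ (u : ℤ → Z2) (t : ℤ),
    (∀ m, u (m + (n:ℤ)) = u m) →
    (∀ m, D (u m) (u (m+1)) = 1) →
    (∀ i j, t ≤ i → i < j → j < t + (n:ℤ) → arg2 (toR3 (u i)) < arg2 (toR3 (u j))) →
    (∀ k, ∃ f : R2 →L[ℝ] ℝ, 0 < f (toR3 (u k)) ∧
      ∀ m, u m = u k ∨ f (toR3 (u m)) < f (toR3 (u k))) →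
    (∑ k ∈ Finset.Ico t (t + (n:ℤ)), aseq u k) = 3 * n - 12 := by
  induction n, hn using Nat.le_induction with
  | base =>
    intro u t hP hD hS hV
    have ha : ∀ k, aseq u k = -1 := a_eq_neg_one_of_three hP hD
    have hc : ((3:ℕ):ℤ) = 3 := by norm_num
    rw [hc, show t + 3 = (t+2)+1 from by ring, sum_Ico_succ_top (by omega),
      show t + 2 = (t+1)+1 from by ring, sum_Ico_succ_top (by omega),
      show t + 1 = t+1 from rfl, sum_Ico_succ_top (by omega), Finset.Ico_self,
      Finset.sum_empty, ha, ha, ha]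
    norm_num
  | succ n hn3 ih =>
    intro u t hP hD hS hV
    have hNc : ((n+1:ℕ):ℤ) = (n:ℤ)+1 := by push_cast; ring
    have hn0i : (0:ℤ) < (n:ℤ) := by exact_mod_cast (by omega : 0 < n)
    have hn3i : (3:ℤ) ≤ (n:ℤ) := by exact_mod_cast hn3
    have hN0 : 0 < n + 1 := by omega
    have hN3 : 3 ≤ n + 1 := by omega
    have ha_le : ∀ k, aseq u k ≤ 1 := a_le_one hN3 hP hD hS hV
    rw [hNc] at hP hS
    by_cases hex : ∃ k ∈ Finset.Ico t (t + ((n:ℤ)+1)), aseq u k = 1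
    · -- blow-down case
      obtain ⟨k, hkmem, hak⟩ := hex
      rw [Finset.mem_Ico] at hkmem
      -- periodicity in convenient form
      have hPc : ∀ m, u (m + ((n:ℤ)+1)) = u m := hP
      have uperN : ∀ (s m : ℤ), u (m + ((n:ℤ)+1) * s) = u m := by
        intro s m
        have := uper_mul (n := n+1) hN0 (by rw [hNc] at *; exact hP) s m
        rwa [hNc] at this
      have aperN : ∀ (s m : ℤ), aseq u (m + ((n:ℤ)+1) * s) = aseq u m := by
        intro s m
        unfold aseq
        have h1 : m + ((n:ℤ)+1) * s - 1 = (m - 1) + ((n:ℤ)+1) * s := by ring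
        have h2 : m + ((n:ℤ)+1) * s + 1 = (m + 1) + ((n:ℤ)+1) * s := by ring
        rw [h1, h2, uperN, uperN]
      -- the blown-down sequence
      set u' : ℤ → Z2 := fun m => u (Hf (n:ℤ) k m) with hu'
      have hfk : Hf (n:ℤ) k k = k + 1 := Hf_high hn0i (le_refl k) (by omega)
      have hP' : ∀ m, u' (m + (n:ℤ)) = u' m := by
        intro m
        show u (Hf (n:ℤ) k (m + (n:ℤ))) = u (Hf (n:ℤ) k m)
        have : m + (n:ℤ) = m + (n:ℤ) * 1 := by ring
        rw [this, Hf_per_mul hn0i, mul_one]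
        exact hPc _
      have hrel : u (k-1) = u k - u (k+1) := by
        have h := aRel hD k
        rw [hak, one_smul] at h
        exact eq_sub_of_add_eq h
      have hD' : ∀ m, D (u' m) (u' (m+1)) = 1 := by
        intro m
        by_cases hd : (n:ℤ) ∣ (m+1-k)
        · obtain ⟨s, hs⟩ := hd
          have hm1 : m + 1 = k + (n:ℤ) * s := by omega
          have e1 : Hf (n:ℤ) k (m+1) = k + 1 + ((n:ℤ)+1)*s := by
            rw [hm1, Hf_per_mul hn0i, hfk]
          have e0 : Hf (n:ℤ) k m = k - 1 + ((n:ℤ)+1)*s := by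
            have := Hf_succ (n := n) (k := k) hn0i m
            rw [if_pos ⟨s, hs⟩] at this
            omega
          show D (u (Hf (n:ℤ) k m)) (u (Hf (n:ℤ) k (m+1))) = 1
          rw [e0, e1, show k - 1 + ((n:ℤ)+1)*s = (k-1) + ((n:ℤ)+1)*s from by ring,
            show k + 1 + ((n:ℤ)+1)*s = (k+1) + ((n:ℤ)+1)*s from by ring, uperN, uperN]
          exact hak
        · have e1 : Hf (n:ℤ) k (m+1) = Hf (n:ℤ) k m + 1 := by
            have := Hf_succ (n := n) (k := k) hn0i m
            rw [if_neg hd] at this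
            omega
          show D (u (Hf (n:ℤ) k m)) (u (Hf (n:ℤ) k (m+1))) = 1
          rw [e1]
          exact hD _
      have hHlow : ∀ m, t ≤ m → m < k → Hf (n:ℤ) k m = m := by
        intro m h1 h2
        exact Hf_low hn0i (by omega) h2
      have hHhigh : ∀ m, k ≤ m → m < t + (n:ℤ) → Hf (n:ℤ) k m = m + 1 := by
        intro m h1 h2
        exact Hf_high hn0i h1 (by omega)
      have hHt : t ≤ Hf (n:ℤ) k t := by
        by_cases h : t < k
        · rw [hHlow t (le_refl t) h]
        · have : k = t := by omega
          rw [this] at hfk ⊢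
          omega
      have hHtop : Hf (n:ℤ) k (t + (n:ℤ) - 1) ≤ t + (n:ℤ) := by
        by_cases h : t + (n:ℤ) - 1 < k
        · rw [Hf_low hn0i (by omega) h]
          omega
        · rw [Hf_high hn0i (by omega) (by omega)]
          omega
      have hS' : ∀ i j, t ≤ i → i < j → j < t + (n:ℤ) →
          arg2 (toR3 (u' i)) < arg2 (toR3 (u' j)) := by
        intro i j h1 h2 h3
        apply hS
        · exact le_trans hHt ((Hf_mono hn0i).le_iff_le.mpr h1)
        · exact Hf_mono hn0i h2
        · have hmj := (Hf_mono (n := (n:ℤ)) (k := k) hn0i).le_iff_le.mpr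
            (show j ≤ t + (n:ℤ) - 1 from by omega)
          omega
      have hV' : ∀ k', ∃ f : R2 →L[ℝ] ℝ, 0 < f (toR3 (u' k')) ∧
          ∀ m, u' m = u' k' ∨ f (toR3 (u' m)) < f (toR3 (u' k')) := by
        intro k'
        obtain ⟨f, h0, hm⟩ := hV (Hf (n:ℤ) k k')
        exact ⟨f, h0, fun m => hm (Hf (n:ℤ) k m)⟩
      have hIH := ih u' t hP' hD' hS' hV'
      -- bookkeeping
      have wm1 := window_rep_mem (t := t) (c := k) (n := (n:ℤ)) hn0i
      have wm2 := window_rep_mem (t := t) (c := k-1) (n := (n:ℤ)) hn0i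
      set m₁ : ℤ := t + (k - t) % (n:ℤ) with hm₁def
      set m₂ : ℤ := t + ((k-1) - t) % (n:ℤ) with hm₂def
      have hm12 : m₁ ≠ m₂ := by
        intro h
        obtain ⟨s1, hs1⟩ := wm1.2
        obtain ⟨s2, hs2⟩ := wm2.2
        rw [h] at hs1
        have : (n:ℤ) * s1 - (n:ℤ) * s2 = -1 := by omega
        have h2 : (n:ℤ) * (s1 - s2) = -1 := by ring_nf; omega
        rcases lt_trichotomy (s1 - s2) 0 with hh | hh | hh
        · nlinarith
        · rw [hh, mul_zero] at h2; omega
        · nlinarith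
      -- the per-element comparison
      have hper_elt : ∀ m ∈ Finset.Ico t (t + (n:ℤ)), aseq u' m =
          aseq u (Hf (n:ℤ) k m) +
            ((if m = m₁ then (-1:ℤ) else 0) + (if m = m₂ then (-1:ℤ) else 0)) := by
        intro m hmem
        rw [Finset.mem_Ico] at hmem
        by_cases hd1 : (n:ℤ) ∣ (m - k)
        · -- m = m₁
          have hmm : m = m₁ := window_rep_unique hn0i
            (by rw [Finset.mem_Ico]; exact hmem) wm1.1 hd1 wm1.2
          have hd2 : ¬ (n:ℤ) ∣ (m + 1 - k) := by
            intro hc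
            have := dvd_sub hc hd1
            have h1 : m + 1 - k - (m - k) = 1 := by ring
            rw [h1] at this
            have := Int.le_of_dvd (by omega) this
            omega
          obtain ⟨s, hs⟩ := id hd1
          have hm0 : m = k + (n:ℤ) * s := by omega
          have eHm : Hf (n:ℤ) k m = k + 1 + ((n:ℤ)+1)*s := by
            rw [hm0, Hf_per_mul hn0i, hfk]
          have eHm1 : Hf (n:ℤ) k (m+1) = Hf (n:ℤ) k m + 1 := by
            have := Hf_succ (n := n) (k := k) hn0i m
            rw [if_neg hd2] at this
            omega
          have eHmm1 : Hf (n:ℤ) k (m-1) = Hf (n:ℤ) k m - 2 := by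
            have := Hf_succ (n := n) (k := k) hn0i (m-1)
            rw [show m - 1 + 1 = m from by ring, if_pos hd1] at this
            omega
          have eA : Hf (n:ℤ) k (m-1) = (k-1) + ((n:ℤ)+1)*s := by omega
          have eB : Hf (n:ℤ) k (m+1) = (k+2) + ((n:ℤ)+1)*s := by omega
          have lhs : aseq u' m = D (u ((k-1) + ((n:ℤ)+1)*s)) (u ((k+2) + ((n:ℤ)+1)*s)) := by
            show D (u (Hf (n:ℤ) k (m-1))) (u (Hf (n:ℤ) k (m+1))) = _
            rw [eA, eB]
          rw [lhs, uperN, uperN]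
          have rhs2 : aseq u (Hf (n:ℤ) k m) = aseq u (k+1) := by
            rw [eHm, show k + 1 + ((n:ℤ)+1)*s = (k+1) + ((n:ℤ)+1)*s from by ring, aperN]
          rw [rhs2, if_pos hmm, if_neg (show ¬ m = m₂ from fun h => hm12 (hmm.symm.trans h))]
          -- goal : D (u (k-1)) (u (k+2)) = aseq u (k+1) + (-1 + 0)
          have hD12 : D (u (k+1)) (u (k+2)) = 1 := by
            have := hD (k+1)
            rwa [show k + 1 + 1 = k + 2 from by ring] at this
          have haseq : aseq u (k+1) = D (u k) (u (k+2)) := by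
            unfold aseq
            rw [show k + 1 - 1 = k from by ring, show k + 1 + 1 = k + 2 from by ring]
          rw [hrel, D_sub_left, hD12, haseq]
          ring
        · by_cases hd2 : (n:ℤ) ∣ (m + 1 - k)
          · -- m = m₂
            have hmm : m = m₂ := window_rep_unique hn0i
              (by rw [Finset.mem_Ico]; exact hmem) wm2.1
              (by have he : m - (k-1) = m + 1 - k := by ring
                  rw [he]; exact hd2)
              wm2.2
            obtain ⟨s, hs⟩ := id hd2
            have hm0 : m + 1 = k + (n:ℤ) * s := by omega
            have eHm1 : Hf (n:ℤ) k (m+1) = k + 1 + ((n:ℤ)+1)*s := by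
              rw [hm0, Hf_per_mul hn0i, hfk]
            have eHm : Hf (n:ℤ) k m = k - 1 + ((n:ℤ)+1)*s := by
              have := Hf_succ (n := n) (k := k) hn0i m
              rw [if_pos hd2] at this
              omega
            have eHmm1 : Hf (n:ℤ) k (m-1) = (k-2) + ((n:ℤ)+1)*s := by
              have := Hf_succ (n := n) (k := k) hn0i (m-1)
              rw [show m - 1 + 1 = m from by ring, if_neg hd1] at this
              omega
            have eB : Hf (n:ℤ) k (m+1) = (k+1) + ((n:ℤ)+1)*s := by omega
            have lhs : aseq u' m = D (u ((k-2) + ((n:ℤ)+1)*s)) (u ((k+1) + ((n:ℤ)+1)*s)) := by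
              show D (u (Hf (n:ℤ) k (m-1))) (u (Hf (n:ℤ) k (m+1))) = _
              rw [eHmm1, eB]
            rw [lhs, uperN, uperN]
            have rhs2 : aseq u (Hf (n:ℤ) k m) = aseq u (k-1) := by
              rw [eHm, show k - 1 + ((n:ℤ)+1)*s = (k-1) + ((n:ℤ)+1)*s from by ring, aperN]
            rw [rhs2, if_neg (show ¬ m = m₁ from fun h => hm12 (h.symm.trans hmm)), if_pos hmm]
            have hD12 : D (u (k-2)) (u (k-1)) = 1 := by
              have := hD (k-2)
              rwa [show k - 2 + 1 = k - 1 from by ring] at this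
            have haseq : aseq u (k-1) = D (u (k-2)) (u k) := by
              unfold aseq
              rw [show k - 1 - 1 = k - 2 from by ring, show k - 1 + 1 = k from by ring]
            have hrel2 : u (k+1) = u k - u (k-1) := by
              rw [hrel]
              abel
            rw [hrel2, D_sub_right, hD12, haseq]
            ring
          · -- generic position
            have eHm1 : Hf (n:ℤ) k (m+1) = Hf (n:ℤ) k m + 1 := by
              have := Hf_succ (n := n) (k := k) hn0i m
              rw [if_neg hd2] at this
              omega
            have eHmm1 : Hf (n:ℤ) k (m-1) = Hf (n:ℤ) k m - 1 := by
              have := Hf_succ (n := n) (k := k) hn0i (m-1)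
              rw [show m - 1 + 1 = m from by ring, if_neg hd1] at this
              omega
            have hne1 : m ≠ m₁ := by
              intro h
              apply hd1
              rw [h]
              exact wm1.2
            have hne2 : m ≠ m₂ := by
              intro h
              apply hd2
              obtain ⟨s, hs⟩ := wm2.2
              rw [h]
              exact ⟨s, by omega⟩
            rw [if_neg hne1, if_neg hne2]
            show D (u (Hf (n:ℤ) k (m-1))) (u (Hf (n:ℤ) k (m+1))) = _
            rw [eHmm1, eHm1]
            unfold aseq
            omega
      -- summing up
      have hsum1 : ∑ m ∈ Finset.Ico t (t + (n:ℤ)), aseq u' m =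
          (∑ m ∈ Finset.Ico t (t + (n:ℤ)), aseq u (Hf (n:ℤ) k m)) + (-2) := by
        rw [Finset.sum_congr rfl hper_elt, Finset.sum_add_distrib]
        congr 1
        rw [Finset.sum_add_distrib]
        have e1 : ∑ m ∈ Finset.Ico t (t + (n:ℤ)), (if m = m₁ then (-1:ℤ) else 0) = -1 := by
          rw [Finset.sum_ite_eq' _ m₁ (fun _ => (-1:ℤ))]
          rw [if_pos wm1.1]
        have e2 : ∑ m ∈ Finset.Ico t (t + (n:ℤ)), (if m = m₂ then (-1:ℤ) else 0) = -1 := by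
          rw [Finset.sum_ite_eq' _ m₂ (fun _ => (-1:ℤ))]
          rw [if_pos wm2.1]
        rw [e1, e2]
        omega
      have hsum2 : ∑ m ∈ Finset.Ico t (t + (n:ℤ)), aseq u (Hf (n:ℤ) k m) =
          (∑ m ∈ Finset.Ico t k, aseq u m) + (∑ m ∈ Finset.Ico (k+1) (t + (n:ℤ) + 1), aseq u m) := by
        rw [← sum_Ico_consec (fun m => aseq u (Hf (n:ℤ) k m)) (by omega : t ≤ k) (by omega : k ≤ t + (n:ℤ))]
        congr 1
        · apply Finset.sum_congr rfl
          intro m hm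
          rw [Finset.mem_Ico] at hm
          rw [hHlow m hm.1 hm.2]
        · rw [show ∑ m ∈ Finset.Ico k (t + (n:ℤ)), aseq u (Hf (n:ℤ) k m) =
              ∑ m ∈ Finset.Ico k (t + (n:ℤ)), aseq u (m + 1) from
            Finset.sum_congr rfl (fun m hm => by
              rw [Finset.mem_Ico] at hm
              rw [hHhigh m hm.1 hm.2])]
          exact sum_Ico_shift (aseq u) k (t + (n:ℤ)) 1
      have hsplit : ∑ m ∈ Finset.Ico t (t + (n:ℤ) + 1), aseq u m =
          (∑ m ∈ Finset.Ico t k, aseq u m) + 1 + (∑ m ∈ Finset.Ico (k+1) (t + (n:ℤ) + 1), aseq u m) := by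
        rw [← sum_Ico_consec (aseq u) (by omega : t ≤ k) (by omega : k ≤ t + (n:ℤ) + 1)]
        rw [← sum_Ico_consec (aseq u) (by omega : k ≤ k+1) (by omega : k+1 ≤ t + (n:ℤ) + 1)]
        rw [Ico_single, Finset.sum_singleton, hak]
        ring
      rw [hsum1, hsum2] at hIH
      rw [hNc, show t + ((n:ℤ)+1) = t + (n:ℤ) + 1 from by ring, hsplit]
      push_cast
      push_cast at hIH
      linarith
    · -- no index can be blown down : aseq ≤ 0 on the window
      push_neg at hex
      have hall : ∀ m ∈ Finset.Ico t (t + ((n:ℤ)+1)), aseq u m ≤ 0 := by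
        intro m hm
        have h1 := ha_le m
        have h2 := hex m hm
        omega
      by_cases hn4 : n = 3
      · -- the square case : sum is 0 by antisymmetry
        subst hn4
        have hc4 : ((3:ℕ):ℤ) + 1 = 4 := by norm_num
        rw [hc4] at hP hall
        rw [show ((3+1:ℕ):ℤ) = 4 from by norm_num]
        have e1 : u (t - 1) = u (t + 3) := by
          have := hP (t-1)
          rw [show t - 1 + 4 = t + 3 from by ring] at this
          exact this.symm
        have e2 : u (t + 4) = u t := hP t
        rw [show t + 4 = (t+3)+1 from by ring, sum_Ico_succ_top (by omega),
          show t + 3 = (t+2)+1 from by ring, sum_Ico_succ_top (by omega),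
          show t + 2 = (t+1)+1 from by ring, sum_Ico_succ_top (by omega),
          sum_Ico_succ_top (by omega), Finset.Ico_self, Finset.sum_empty]
        have v0 : aseq u t = D (u (t+3)) (u (t+1)) := by
          unfold aseq
          rw [e1]
        have v2 : aseq u (t+2) = D (u (t+1)) (u (t+3)) := by
          unfold aseq
          rw [show t + 2 - 1 = t + 1 from by ring, show t + 2 + 1 = t + 3 from by ring]
        have v1 : aseq u (t+1) = D (u t) (u (t+2)) := by
          unfold aseq
          rw [show t + 1 - 1 = t from by ring, show t + 1 + 1 = t + 2 from by ring]
        have v3 : aseq u (t+3) = D (u (t+2)) (u t) := by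
          unfold aseq
          rw [show t + 3 - 1 = t + 2 from by ring, show t + 3 + 1 = t + 4 from by ring, e2]
        rw [v0, v1, show t+1+1 = t+2 from by ring, show t+2+1 = t+3 from by ring, v2, v3]
        have h1 := D_antisymm (u (t+3)) (u (t+1))
        have h2 := D_antisymm (u t) (u (t+2))
        push_cast
        omega
      · -- n+1 ≥ 5 : angle contradiction
        exfalso
        have hn4' : 4 ≤ n := by omega
        have hP' : ∀ m, u (m + ((n+1:ℕ):ℤ)) = u m := by rw [hNc]; exact hP
        have hS' : ∀ i j, t ≤ i → i < j → j < t + ((n+1:ℕ):ℤ) →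
            arg2 (toR3 (u i)) < arg2 (toR3 (u j)) := by rw [hNc]; exact hS
        have hNZ : ∀ m, toR3 (u m) ≠ 0 := u_nz hD
        have hmono := ba_strictMono (n := n+1) (u := u) (t := t) hN3 hS'
        have hperiod := fun m => ba_add_period (n := n+1) (u := u) (t := t) hN0 m
        rw [hNc] at hperiod
        have hkey : ∀ m ∈ Finset.Ico t (t + ((n:ℤ)+1)),
            Real.pi ≤ ba (n+1) u t (m+1) - ba (n+1) u t (m-1) := by
          intro m hm
          apply pi_le_of_D_nonpos (n := n+1) (t := t) hN0 hP' hNZ (hall m hm)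
          · have : (m:ℤ) - 1 < m + 1 := by omega
            have := hmono this
            linarith
          · have h2 := hmono (show (m:ℤ)+1 < (m-1) + ((n:ℤ)+1) from by omega)
            have h3 := hperiod (m-1)
            linarith
        have htel1 : ∑ m ∈ Finset.Ico t (t + ((n:ℤ)+1)),
            (ba (n+1) u t (m+1) - ba (n+1) u t m) = 2 * Real.pi := by
          rw [sum_telescope_Ico (ba (n+1) u t) (by omega : t ≤ t + ((n:ℤ)+1))]
          have := hperiod t
          rw [show t + ((n:ℤ)+1) = t + ((n:ℤ)+1) from rfl]
          linarith
        have htel2 : ∑ m ∈ Finset.Ico t (t + ((n:ℤ)+1)),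
            (ba (n+1) u t m - ba (n+1) u t (m-1)) = 2 * Real.pi := by
          have := sum_telescope_Ico (fun m => ba (n+1) u t (m-1)) (by omega : t ≤ t + ((n:ℤ)+1))
          simp only [show ∀ m : ℤ, m + 1 - 1 = m from fun m => by ring] at this
          rw [this]
          have := hperiod (t-1)
          rw [show t + ((n:ℤ)+1) - 1 = t - 1 + ((n:ℤ)+1) from by ring]
          linarith
        have hsum : ∑ m ∈ Finset.Ico t (t + ((n:ℤ)+1)),
            (ba (n+1) u t (m+1) - ba (n+1) u t (m-1)) = 4 * Real.pi := by
          have : ∀ m : ℤ, ba (n+1) u t (m+1) - ba (n+1) u t (m-1) =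
              (ba (n+1) u t (m+1) - ba (n+1) u t m) + (ba (n+1) u t m - ba (n+1) u t (m-1)) := by
            intro m; ring
          rw [Finset.sum_congr rfl (fun m _ => this m), Finset.sum_add_distrib, htel1, htel2]
          ring
        have hcard : (Finset.Ico t (t + ((n:ℤ)+1))).card = n + 1 := by
          rw [Int.card_Ico]
          omega
        have hlb := Finset.card_nsmul_le_sum (Finset.Ico t (t + ((n:ℤ)+1)))
          (fun m => ba (n+1) u t (m+1) - ba (n+1) u t (m-1)) Real.pi hkey
        rw [hcard, hsum] at hlb
        have hpi := Real.pi_pos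
        have : ((n+1 : ℕ):ℝ) * Real.pi ≤ 4 * Real.pi := by
          rw [← nsmul_eq_mul]
          exact hlb
        have hge : (5:ℝ) ≤ ((n+1:ℕ):ℝ) := by exact_mod_cast (by omega : 5 ≤ n+1)
        nlinarith

/-! ### Bridge prerequisites -/

lemma Dr_self (x : R2) : Dr x x = 0 := by simp [Dr]; ring
lemma Dr_antisymm (x y : R2) : Dr x y = - Dr y x := by simp [Dr]; ring
lemma Dr_add_right (x y z : R2) : Dr x (y + z) = Dr x y + Dr x z := by simp [Dr]; ring
lemma Dr_smul_right (a : ℝ) (x y : R2) : Dr x (a • y) = a * Dr x y := by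
  simp [Dr, Pi.smul_apply, smul_eq_mul]; ring

noncomputable def lfun (c₀ c₁ : ℝ) : R2 →L[ℝ] ℝ :=
  c₀ • (ContinuousLinearMap.proj (R := ℝ) (φ := fun _ : Fin 2 => ℝ) 0) +
    c₁ • (ContinuousLinearMap.proj (R := ℝ) (φ := fun _ : Fin 2 => ℝ) 1)

lemma lfun_apply (c₀ c₁ : ℝ) (y : R2) : lfun c₀ c₁ y = c₀ * y 0 + c₁ * y 1 := by
  simp [lfun, ContinuousLinearMap.proj_apply, smul_eq_mul]

/-- the edge functional : y ↦ Dr y z + Dr x y -/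
noncomputable def efun (x z : R2) : R2 →L[ℝ] ℝ := lfun (z 1 - x 1) (x 0 - z 0)

lemma efun_apply (x z y : R2) : efun x z y = Dr y z + Dr x y := by
  rw [efun, lfun_apply, Dr, Dr]
  ring

lemma efun_left (x z : R2) : efun x z x = Dr x z := by
  rw [efun_apply, Dr_self]
  ring

lemma efun_right (x z : R2) : efun x z z = Dr x z := by
  rw [efun_apply, Dr_self]
  ring

/-- Every declared vertex admits a strictly maximizing positive functional. -/
lemma vertex_functional {V : Finset Z2} {P : Set R2}
    (hPdef : P = convexHull ℝ (toR3 '' (V : Set Z2)))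
    (hint : (0:R2) ∈ interior P)
    {v : Z2} (hv : v ∈ V)
    (hvert : toR3 v ∉ convexHull ℝ (toR3 '' ((V.erase v : Finset Z2) : Set Z2)))
    (hne : (V.erase v).Nonempty) :
    ∃ f : R2 →L[ℝ] ℝ, 0 < f (toR3 v) ∧ (∀ x ∈ P, f x ≤ f (toR3 v)) ∧
      (∀ x ∈ P, f x = f (toR3 v) → x = toR3 v) := by
  classical
  set K := convexHull ℝ (toR3 '' ((V.erase v : Finset Z2) : Set Z2)) with hK
  have hKconv : Convex ℝ K := convex_convexHull _ _
  have hKcl : IsClosed K :=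
    (Set.Finite.isCompact_convexHull ℝ (((V.erase v).finite_toSet).image _)).isClosed
  obtain ⟨f, c, hfc, hcf⟩ := geometric_hahn_banach_closed_point hKconv hKcl hvert
  obtain ⟨w₀, hw₀⟩ := hne
  have hne' : (toR3 '' ((V.erase v : Finset Z2) : Set Z2)).Nonempty := ⟨toR3 w₀, ⟨w₀, hw₀, rfl⟩⟩
  have hKne : K.Nonempty := hne'.mono (subset_convexHull _ _)
  have hPdecomp : P = convexJoin ℝ {toR3 v} K := by
    rw [hPdef]
    have hins : (toR3 '' (V : Set Z2)) = insert (toR3 v) (toR3 '' ((V.erase v : Finset Z2) : Set Z2)) := by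
      rw [← Set.image_insert_eq]
      congr 1
      rw [← Finset.coe_insert, Finset.insert_erase hv]
    rw [hins, convexHull_insert hne']
  -- main comparison
  have hmain : ∀ x ∈ P, f x ≤ f (toR3 v) ∧ (f x = f (toR3 v) → x = toR3 v) := by
    intro x hx
    rw [hPdecomp] at hx
    rw [mem_convexJoin] at hx
    obtain ⟨a, ha, b, hb, hseg⟩ := hx
    rw [Set.mem_singleton_iff] at ha
    subst ha
    obtain ⟨p, q, hp, hq, hpq, hx⟩ := hseg
    have hfb : f b < f (toR3 v) := lt_trans (hfc b hb) hcf
    have hfx : f x = p * f (toR3 v) + q * f b := by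
      rw [← hx]
      simp [map_add, map_smul, smul_eq_mul]
    have hp' : p = 1 - q := by linarith
    constructor
    · rw [hfx, hp']
      nlinarith [mul_nonneg hq (sub_nonneg.mpr hfb.le)]
    · intro heq
      rw [hfx, hp'] at heq
      have hz : q * (f (toR3 v) - f b) = 0 := by linear_combination -heq
      have hq0 : q = 0 := by
        rcases eq_or_lt_of_le hq with h | h
        · exact h.symm
        · exfalso
          nlinarith
      have hp1 : p = 1 := by linarith
      rw [← hx, hq0, hp1, one_smul, zero_smul, add_zero]
  -- positivity of the maximum value
  have hfv : 0 < f (toR3 v) := by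
    have hwne : f (toR3 w₀ - toR3 v) ≠ 0 := by
      rw [map_sub]
      have h1 : f (toR3 w₀) < f (toR3 v) :=
        lt_trans (hfc _ (subset_convexHull _ _ ⟨w₀, hw₀, rfl⟩)) hcf
      intro hcon
      rw [sub_eq_zero] at hcon
      exact absurd hcon (ne_of_lt h1)
    set w : R2 := toR3 w₀ - toR3 v with hwdef
    obtain ⟨ε, hε, hball⟩ : ∃ ε > 0, Metric.ball (0:R2) ε ⊆ P := by
      rw [mem_interior_iff_mem_nhds] at hint
      exact Metric.mem_nhds_iff.mp hint
    set sgn : ℝ := if 0 < f w then 1 else -1 with hsgn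
    have hsfw : 0 < sgn * f w := by
      rw [hsgn]
      split_ifs with h
      · linarith
      · push_neg at h
        have : f w < 0 := lt_of_le_of_ne h hwne
        nlinarith
    set c₀ : ℝ := ε / (2 * ‖w‖ + 2) with hc₀
    have hc₀pos : 0 < c₀ := by
      apply div_pos hε
      positivity
    set p : R2 := (c₀ * sgn) • w with hpdef
    have hpmem : p ∈ P := by
      apply hball
      rw [Metric.mem_ball, dist_zero_right, hpdef, norm_smul]
      have h1 : ‖c₀ * sgn‖ = c₀ := by
        rw [hsgn]
        split_ifs <;> simp [abs_of_pos hc₀pos, abs_of_nonneg (le_of_lt hc₀pos)]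
      rw [h1, hc₀]
      rw [div_mul_eq_mul_div, div_lt_iff₀ (by positivity)]
      nlinarith [norm_nonneg w]
    have hfp : 0 < f p := by
      rw [hpdef, map_smul, smul_eq_mul]
      have : c₀ * sgn * f w = c₀ * (sgn * f w) := by ring
      rw [this]
      positivity
    exact lt_of_lt_of_le hfp ((hmain p hpmem).1)
  exact ⟨f, hfv, fun x hx => (hmain x hx).1, fun x hx => (hmain x hx).2⟩

/-! ### More bridge lemmas -/

lemma arg_eq_smul {x y : R2} (hx : x ≠ 0) (h : arg2 x = arg2 y) :
    y = (‖(cx y)‖ / ‖(cx x)‖) • x := by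
  have hx0 : ‖(cx x)‖ ≠ 0 := by
    rw [Ne, norm_eq_zero, cx_eq_zero]
    exact hx
  have ex0 : ‖(cx x)‖ * Real.cos (arg2 x) = x 0 := Complex.norm_mul_cos_arg _
  have ex1 : ‖(cx x)‖ * Real.sin (arg2 x) = x 1 := Complex.norm_mul_sin_arg _
  have ey0 : ‖(cx y)‖ * Real.cos (arg2 y) = y 0 := Complex.norm_mul_cos_arg _
  have ey1 : ‖(cx y)‖ * Real.sin (arg2 y) = y 1 := Complex.norm_mul_sin_arg _
  rw [← h] at ey0 ey1
  funext i
  fin_cases i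
  · show y 0 = (‖(cx y)‖ / ‖(cx x)‖) * x 0
    rw [← ex0, ← ey0]
    field_simp
  · show y 1 = (‖(cx y)‖ / ‖(cx x)‖) * x 1
    rw [← ex1, ← ey1]
    field_simp

lemma D_expand (a b c d : ℤ) (X Z : Z2) :
    D (a • X + b • Z) (c • X + d • Z) = (a * d - b * c) * D X Z := by
  simp only [D, Pi.add_apply, Pi.smul_apply, smul_eq_mul]
  ring

lemma D_e01 : D (![1, 0]) (![0, 1]) = 1 := by
  simp [D]

/-! ### The main theorem -/

set_option maxHeartbeats 1000000 in
theorem main_theorem (V : Finset Z2) (P : Set R2)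
    (hP : P = convexHull ℝ (toR3 '' (V : Set Z2)))
    (hvert : ∀ v ∈ V, toR3 v ∉ convexHull ℝ (toR3 '' ((V.erase v : Finset Z2) : Set Z2)))
    (hint : (0 : R2) ∈ interior P)
    (hedge : ∀ u v : Z2, u ∈ V → v ∈ V → u ≠ v →
      IsExposed ℝ P (segment ℝ (toR3 u) (toR3 v)) →
        Submodule.span ℤ {u, v} = (⊤ : Submodule ℤ Z2)) :
    V.card ≤ 6 := by
  classical
  by_contra hbig
  push_neg at hbig
  set n := V.card with hncard
  have hn7 : 7 ≤ n := hbig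
  have hn3 : 3 ≤ n := by omega
  have hn0 : 0 < n := by omega
  have hn0i : (0:ℤ) < (n:ℤ) := by exact_mod_cast hn0
  have hPconv : Convex ℝ P := hP ▸ convex_convexHull ℝ _
  have hsubP : ∀ v ∈ V, toR3 v ∈ P := fun v hv => hP ▸ subset_convexHull ℝ _ ⟨v, hv, rfl⟩
  -- vertex functionals
  have hfun : ∀ v ∈ V, ∃ f : R2 →L[ℝ] ℝ, 0 < f (toR3 v) ∧ (∀ x ∈ P, f x ≤ f (toR3 v)) ∧
      (∀ x ∈ P, f x = f (toR3 v) → x = toR3 v) := by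
    intro v hv
    apply vertex_functional hP hint hv (hvert v hv)
    rw [← Finset.card_pos, Finset.card_erase_of_mem hv]
    omega
  choose! F hF0 hFle hFeq using hfun
  -- vertices are nonzero
  have hnz : ∀ v ∈ V, toR3 v ≠ 0 := by
    intro v hv hc
    have h1 := hF0 v hv
    rw [hc, map_zero] at h1
    exact lt_irrefl _ h1
  -- arguments are injective on V
  have harginj : ∀ v ∈ V, ∀ w ∈ V, arg2 (toR3 v) = arg2 (toR3 w) → v = w := by
    intro v hv w hw h
    by_contra hne
    have hw_eq : toR3 w = (‖(cx (toR3 w))‖ / ‖(cx (toR3 v))‖) • toR3 v :=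
      arg_eq_smul (hnz v hv) h
    have hv_eq : toR3 v = (‖(cx (toR3 v))‖ / ‖(cx (toR3 w))‖) • toR3 w :=
      arg_eq_smul (hnz w hw) h.symm
    set r : ℝ := ‖(cx (toR3 w))‖ / ‖(cx (toR3 v))‖ with hr
    set r' : ℝ := ‖(cx (toR3 v))‖ / ‖(cx (toR3 w))‖ with hr'
    have hvne : toR3 v ≠ toR3 w := fun hc => hne (toR3_inj hc)
    have hlt1 : F v (toR3 w) < F v (toR3 v) := by
      rcases lt_or_eq_of_le (hFle v hv (toR3 w) (hsubP w hw)) with h1 | h1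
      · exact h1
      · exact absurd (hFeq v hv (toR3 w) (hsubP w hw) h1).symm hvne
    have hlt2 : F w (toR3 v) < F w (toR3 w) := by
      rcases lt_or_eq_of_le (hFle w hw (toR3 v) (hsubP v hv)) with h1 | h1
      · exact h1
      · exact absurd (hFeq w hw (toR3 v) (hsubP v hv) h1) hvne
    rw [hw_eq, map_smul, smul_eq_mul] at hlt1
    rw [hv_eq, map_smul, smul_eq_mul] at hlt2
    have hFv := hF0 v hv
    have hFw := hF0 w hw
    have hrlt : r < 1 := by nlinarith
    have hrlt' : r' < 1 := by nlinarith
    have hrpos : 0 ≤ r := by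
      rw [hr]
      positivity
    have hrr : r * r' = 1 := by
      rw [hr, hr']
      have h1 : ‖(cx (toR3 v))‖ ≠ 0 := by
        rw [Ne, norm_eq_zero, cx_eq_zero]; exact hnz v hv
      have h2 : ‖(cx (toR3 w))‖ ≠ 0 := by
        rw [Ne, norm_eq_zero, cx_eq_zero]; exact hnz w hw
      field_simp
    nlinarith
  -- the sorted enumeration
  set key : Z2 → ℝ := fun v => arg2 (toR3 v) with hkey
  have hkeyinj : Set.InjOn key (V : Set Z2) := fun a ha b hb h => harginj a ha b hb h
  set A := V.image key with hA
  have hAcard : A.card = n := by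
    rw [hA, Finset.card_image_of_injOn hkeyinj]
  set e := A.orderIsoOfFin hAcard with he
  have hpick : ∀ i : Fin n, ∃ v, v ∈ V ∧ key v = (e i : ℝ) := by
    intro i
    have hmem := (e i).2
    obtain ⟨v, hv, hkv⟩ := Finset.mem_image.mp hmem
    exact ⟨v, hv, hkv⟩
  choose vtx hvtxV hvtxkey using hpick
  have hidx : ∀ m : ℤ, (m % (n:ℤ)).toNat < n := by
    intro m
    have h0 := Int.emod_nonneg m (by omega : (n:ℤ) ≠ 0)
    have h1 := Int.emod_lt_of_pos m hn0i
    omega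
  set u : ℤ → Z2 := fun m => vtx ⟨(m % (n:ℤ)).toNat, hidx m⟩ with hu
  have huV : ∀ m, u m ∈ V := fun m => hvtxV _
  have hNZ : ∀ m, toR3 (u m) ≠ 0 := fun m => hnz _ (huV m)
  -- periodicity
  have hPer : ∀ m, u (m + (n:ℤ)) = u m := by
    intro m
    have harg : ((m + (n:ℤ)) % (n:ℤ)).toNat = (m % (n:ℤ)).toNat := by
      have h1 : m + (n:ℤ) = m + (n:ℤ) * 1 := by ring
      rw [h1, Int.add_mul_emod_self_left]
    exact congrArg vtx (Fin.ext harg)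
  -- strict angular sorting on the window [0, n)
  have hSw : ∀ i j, (0:ℤ) ≤ i → i < j → j < 0 + (n:ℤ) → arg2 (toR3 (u i)) < arg2 (toR3 (u j)) := by
    intro i j h1 h2 h3
    have hi : i % (n:ℤ) = i := Int.emod_eq_of_lt h1 (by omega)
    have hj : j % (n:ℤ) = j := Int.emod_eq_of_lt (by omega) (by omega)
    have hki : key (u i) = (e ⟨(i % (n:ℤ)).toNat, hidx i⟩ : ℝ) := hvtxkey _
    have hkj : key (u j) = (e ⟨(j % (n:ℤ)).toNat, hidx j⟩ : ℝ) := hvtxkey _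
    show key (u i) < key (u j)
    rw [hki, hkj]
    have hlt : (⟨(i % (n:ℤ)).toNat, hidx i⟩ : Fin n) < ⟨(j % (n:ℤ)).toNat, hidx j⟩ := by
      rw [Fin.mk_lt_mk]
      omega
    exact_mod_cast e.strictMono hlt
  -- surjectivity onto V within any window
  have hsurj : ∀ v ∈ V, ∀ a : ℤ, ∃ j, a ≤ j ∧ j < a + (n:ℤ) ∧ u j = v := by
    intro v hv a
    have hkv : key v ∈ A := Finset.mem_image_of_mem key hv
    obtain ⟨i, hi⟩ := e.surjective ⟨key v, hkv⟩
    obtain ⟨hmem, hdvd⟩ := window_rep_mem (t := a) (c := (i:ℤ)) (n := (n:ℤ)) hn0i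
    rw [Finset.mem_Ico] at hmem
    refine ⟨a + ((i:ℤ) - a) % (n:ℤ), hmem.1, hmem.2, ?_⟩
    set j := a + ((i:ℤ) - a) % (n:ℤ)
    have hjmod : j % (n:ℤ) = (i:ℤ) % (n:ℤ) := by
      obtain ⟨s, hs⟩ := hdvd
      have hj' : j = (i:ℤ) + (n:ℤ) * s := by omega
      rw [hj', Int.add_mul_emod_self_left]
    have himod : (i:ℤ) % (n:ℤ) = (i:ℤ) := Int.emod_eq_of_lt (by positivity) (by exact_mod_cast i.2)
    have hfin : (⟨(j % (n:ℤ)).toNat, hidx j⟩ : Fin n) = i := by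
      have hval : (j % (n:ℤ)).toNat = (i : ℕ) := by
        rw [hjmod, himod]
        omega
      exact Fin.ext hval
    have huj : u j = vtx i := congrArg vtx hfin
    have hkuj : key (u j) = (e i : ℝ) := by
      rw [huj]
      exact hvtxkey i
    have hkv2 : key (u j) = key v := by
      rw [hkuj, hi]
    exact hkeyinj (huV j) hv hkv2
  -- the vertex condition for the core theorem
  have hVcore : ∀ k, ∃ f : R2 →L[ℝ] ℝ, 0 < f (toR3 (u k)) ∧
      ∀ m, u m = u k ∨ f (toR3 (u m)) < f (toR3 (u k)) := by
    intro k
    refine ⟨F (u k), hF0 _ (huV k), fun m => ?_⟩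
    by_cases he' : u m = u k
    · exact Or.inl he'
    · refine Or.inr ?_
      rcases lt_or_eq_of_le (hFle (u k) (huV k) (toR3 (u m)) (hsubP _ (huV m))) with h1 | h1
      · exact h1
      · exact absurd (toR3_inj (hFeq (u k) (huV k) _ (hsubP _ (huV m)) h1)) he'
  -- distinctness of cyclically close indices
  have hne_close : ∀ i j : ℤ, i ≠ j → -(n:ℤ) < i - j → i - j < (n:ℤ) → u i ≠ u j := by
    intro i j hij h1 h2 hc
    obtain ⟨s, hs⟩ := u_eq_dvd (t := 0) hn0 hPer hSw hc
    rcases lt_trichotomy s 0 with h | h | h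
    · have h4 : (n:ℤ) * s ≤ -(n:ℤ) := by nlinarith
      linarith
    · rw [h, mul_zero] at hs
      omega
    · have h4 : (n:ℤ) ≤ (n:ℤ) * s := by nlinarith
      linarith
  -- angle machinery
  have hmono := ba_strictMono (n := n) (u := u) (t := 0) hn3 hSw
  have hperiod := fun m => ba_add_period (n := n) (u := u) (t := 0) hn0 m
  -- ball inside P
  obtain ⟨ε, hε, hball⟩ : ∃ ε > 0, Metric.ball (0:R2) ε ⊆ P := by
    rw [mem_interior_iff_mem_nhds] at hint
    exact Metric.mem_nhds_iff.mp hint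
  -- no halfplane contains all the vertices
  have hnohalf : ∀ x₁ : R2, x₁ ≠ 0 →
      ¬ (∀ y ∈ toR3 '' (V : Set Z2), 0 ≤ Dr x₁ y) := by
    intro x₁ hx₁ hhalf
    have hPhalf : P ⊆ {y : R2 | 0 ≤ Dr x₁ y} := by
      rw [hP]
      apply convexHull_min hhalf
      intro y1 hy1 y2 hy2 a b ha hb hab
      have h1 : 0 ≤ Dr x₁ y1 := hy1
      have h2 : 0 ≤ Dr x₁ y2 := hy2
      show 0 ≤ Dr x₁ (a • y1 + b • y2)
      rw [Dr_add_right, Dr_smul_right, Dr_smul_right]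
      have := mul_nonneg ha h1
      have := mul_nonneg hb h2
      linarith
    set q : R2 := ![-(x₁ 1), x₁ 0] with hq
    have hq0 : q 0 = -(x₁ 1) := rfl
    have hq1 : q 1 = x₁ 0 := rfl
    have hqpos : 0 < Dr x₁ q := by
      have hcomp : x₁ 0 ≠ 0 ∨ x₁ 1 ≠ 0 := by
        by_contra hcc
        push_neg at hcc
        apply hx₁
        funext i
        fin_cases i
        · exact hcc.1
        · exact hcc.2
      rw [Dr, hq0, hq1]
      rcases hcomp with h | h
      · rcases h.lt_or_gt with h' | h' <;> nlinarith [mul_self_nonneg (x₁ 0), mul_self_nonneg (x₁ 1)]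
      · rcases h.lt_or_gt with h' | h' <;> nlinarith [mul_self_nonneg (x₁ 0), mul_self_nonneg (x₁ 1)]
    set p : R2 := (-(ε / (2 * ‖q‖ + 2))) • q with hp
    have hpmem : p ∈ P := by
      apply hball
      rw [Metric.mem_ball, dist_zero_right, hp, norm_smul]
      have h1 : ‖-(ε / (2 * ‖q‖ + 2))‖ = ε / (2 * ‖q‖ + 2) := by
        rw [norm_neg, Real.norm_eq_abs, abs_of_pos (by positivity)]
      rw [h1, div_mul_eq_mul_div, div_lt_iff₀ (by positivity)]
      nlinarith [norm_nonneg q]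
    have hcontra := hPhalf hpmem
    simp only [Set.mem_setOf_eq, hp] at hcontra
    rw [Dr_smul_right] at hcontra
    nlinarith [mul_pos (show (0:ℝ) < ε / (2 * ‖q‖ + 2) from by positivity) hqpos]
  -- the gaps are less than π
  have hgap : ∀ m : ℤ, ba n u 0 (m+1) - ba n u 0 m < Real.pi := by
    intro m
    by_contra hc
    push_neg at hc
    apply hnohalf (toR3 (u (m+1))) (hNZ (m+1))
    rintro y ⟨w, hw, rfl⟩
    obtain ⟨j, hj1, hj2, hj3⟩ := hsurj w hw (m+1)
    rw [← hj3]
    rw [ba_sin (t := 0) hn0 hPer (m+1) j]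
    have h1 : ba n u 0 (m+1) ≤ ba n u 0 j := hmono.monotone hj1
    have h2 : ba n u 0 j ≤ ba n u 0 (m+1) + Real.pi := by
      have h3 : ba n u 0 j ≤ ba n u 0 (m + (n:ℤ)) := hmono.monotone (by omega)
      have h4 := hperiod m
      linarith
    have hsin : 0 ≤ Real.sin (ba n u 0 j - ba n u 0 (m+1)) :=
      Real.sin_nonneg_of_nonneg_of_le_pi (by linarith) (by linarith)
    have ha1 := norm_nonneg (cx (toR3 (u (m+1))))
    have ha2 := norm_nonneg (cx (toR3 (u j)))
    positivity
  -- positivity of consecutive determinants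
  have hDpos : ∀ m : ℤ, 0 < D (u m) (u (m+1)) := by
    intro m
    refine D_pos_of_lt_pi (t := 0) hn0 hPer hNZ ?_ (hgap m)
    have := hmono (lt_add_one m)
    linarith
  -- strict bound for non-endpoint vertices
  have hFlt : ∀ m : ℤ, ∀ w ∈ V, w ≠ u m → w ≠ u (m+1) →
      efun (toR3 (u m)) (toR3 (u (m+1))) (toR3 w) < Dr (toR3 (u m)) (toR3 (u (m+1))) := by
    intro m w hw hw1 hw2
    set x := toR3 (u m) with hx
    set z := toR3 (u (m+1)) with hz
    set dd := Dr x z with hdd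
    have hddpos : 0 < dd := by
      rw [hdd, hx, hz, ← D_cast]
      exact_mod_cast hDpos m
    obtain ⟨j, hj1, hj2, hj3⟩ := hsurj w hw (m+2)
    have hjne1 : j ≠ m + 1 + (n:ℤ) := by
      intro hc
      apply hw2
      rw [← hj3, hc, hPer]
    have hjne0 : j ≠ m + (n:ℤ) := by
      intro hc
      apply hw1
      rw [← hj3, hc, hPer]
    have hjlt : j < m + (n:ℤ) := by omega
    set p := Dr x (toR3 w) with hp
    set r := Dr z (toR3 w) with hr
    rw [efun_apply]
    have har : Dr (toR3 w) z = -r := by rw [hr, Dr_antisymm]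
    rw [har]
    by_contra hge
    push_neg at hge
    have hb1pos : 0 < ba n u 0 j - ba n u 0 (m+1) := by
      have := hmono (show m+1 < j by omega)
      linarith
    have hb1lt : ba n u 0 j - ba n u 0 (m+1) < 2 * Real.pi := by
      have h4 := hperiod (m+1)
      have := hmono (show j < (m+1) + (n:ℤ) by omega)
      linarith
    have hb2pos : 0 < ba n u 0 j - ba n u 0 m := by
      have := hmono (show m < j by omega)
      linarith
    have hb2lt : ba n u 0 j - ba n u 0 m < 2 * Real.pi := by
      have h4 := hperiod m
      have := hmono hjlt
      linarith
    have hpe : p = ‖(cx x)‖ * ‖(cx (toR3 w))‖ *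
        Real.sin (ba n u 0 j - ba n u 0 m) := by
      rw [hp, hx, ← hj3]
      exact ba_sin (t := 0) hn0 hPer m j
    have hre : r = ‖(cx z)‖ * ‖(cx (toR3 w))‖ *
        Real.sin (ba n u 0 j - ba n u 0 (m+1)) := by
      rw [hr, hz, ← hj3]
      exact ba_sin (t := 0) hn0 hPer (m+1) j
    have hAx : 0 < ‖(cx x)‖ := by
      rw [hx]
      exact abs_cx_pos' hNZ m
    have hAz : 0 < ‖(cx z)‖ := by
      rw [hz]
      exact abs_cx_pos' hNZ (m+1)
    have hAw : 0 < ‖(cx (toR3 w))‖ := by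
      rw [norm_pos_iff, Ne, cx_eq_zero]
      exact hnz w hw
    have hxnez : x ≠ z := by
      intro hc
      exact hne_close m (m+1) (by omega) (by omega) (by omega) (toR3_inj hc)
    rcases lt_or_ge 0 p with hppos | hpnonpos
    · -- p > 0 : then both dets positive, z is inside conv {0, x, w}
      have hβ2 : ba n u 0 j - ba n u 0 m < Real.pi := by
        by_contra hcc
        push_neg at hcc
        have hsin := sin_nonpos_of_pi_le hcc hb2lt
        have hnp : ‖(cx x)‖ * ‖(cx (toR3 w))‖ *
            Real.sin (ba n u 0 j - ba n u 0 m) ≤ 0 :=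
          mul_nonpos_of_nonneg_of_nonpos (mul_nonneg hAx.le hAw.le) hsin
        linarith [hpe ▸ hppos]
      have hβ1 : ba n u 0 j - ba n u 0 (m+1) < Real.pi := by
        have := hmono (lt_add_one m)
        linarith
      have hrpos : 0 < r := by
        rw [hre]
        have hsin := Real.sin_pos_of_pos_of_lt_pi hb1pos hβ1
        positivity
      have hcr := cramerR x (toR3 w) z
      set f := F (u (m+1)) with hf
      have hfz : 0 < f z := hF0 _ (huV (m+1))
      have hfx : f x < f z := by
        rcases lt_or_eq_of_le (hFle (u (m+1)) (huV (m+1)) x (hsubP _ (huV m))) with h1 | h1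
        · exact h1
        · exact absurd (hFeq (u (m+1)) (huV (m+1)) x (hsubP _ (huV m)) h1) hxnez
      have hfw : f (toR3 w) < f z := by
        have hwz : toR3 w ≠ z := fun hc => hw2 (toR3_inj hc)
        rcases lt_or_eq_of_le (hFle (u (m+1)) (huV (m+1)) (toR3 w) (hsubP _ hw)) with h1 | h1
        · exact h1
        · exact absurd (hFeq (u (m+1)) (huV (m+1)) (toR3 w) (hsubP _ hw) h1) hwz
      have happ : p * f z = r * f x + dd * f (toR3 w) := by
        have h5 := congrArg f hcr
        simpa [map_add, map_smul, smul_eq_mul] using h5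
      nlinarith [mul_lt_mul_of_pos_left hfx hrpos, mul_lt_mul_of_pos_left hfw hddpos,
        mul_le_mul_of_nonneg_right (show r + dd ≤ p by linarith) hfz.le]
    · rcases lt_or_ge r 0 with hrneg | hrnonneg
      · -- r < 0 : x is inside conv {0, z, w}
        have hcr := cramerR z (toR3 w) x
        have hzx : Dr z x = -dd := by rw [hdd, Dr_antisymm]
        rw [hzx] at hcr
        set f := F (u m) with hf
        have hfx : 0 < f x := hF0 _ (huV m)
        have hfz : f z < f x := by
          rcases lt_or_eq_of_le (hFle (u m) (huV m) z (hsubP _ (huV (m+1)))) with h1 | h1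
          · exact h1
          · exact absurd (hFeq (u m) (huV m) z (hsubP _ (huV (m+1))) h1) (Ne.symm hxnez)
        have hfw : f (toR3 w) < f x := by
          have hwx : toR3 w ≠ x := fun hc => hw1 (toR3_inj hc)
          rcases lt_or_eq_of_le (hFle (u m) (huV m) (toR3 w) (hsubP _ hw)) with h1 | h1
          · exact h1
          · exact absurd (hFeq (u m) (huV m) (toR3 w) (hsubP _ hw) h1) hwx
        have happ : r * f x = p * f z + (-dd) * f (toR3 w) := by
          have h5 := congrArg f hcr
          simpa [map_add, map_smul, smul_eq_mul] using h5
        nlinarith [mul_le_mul_of_nonpos_left hfz.le hpnonpos,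
          mul_lt_mul_of_neg_left hfw (show -dd < 0 by linarith),
          mul_le_mul_of_nonneg_right (show r ≤ p - dd by linarith) hfx.le]
      · linarith
  -- the halfspace bound over all of P
  have hPle : ∀ m : ℤ, ∀ y ∈ P, efun (toR3 (u m)) (toR3 (u (m+1))) y ≤
      Dr (toR3 (u m)) (toR3 (u (m+1))) := by
    intro m y hy
    have hconv : Convex ℝ {y : R2 | efun (toR3 (u m)) (toR3 (u (m+1))) y ≤
        Dr (toR3 (u m)) (toR3 (u (m+1)))} :=
      convex_halfSpace_le ⟨map_add _, map_smul _⟩ _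
    have hgen : toR3 '' (V : Set Z2) ⊆ {y : R2 | efun (toR3 (u m)) (toR3 (u (m+1))) y ≤
        Dr (toR3 (u m)) (toR3 (u (m+1)))} := by
      rintro y ⟨w, hw, rfl⟩
      by_cases hwm : w = u m
      · subst hwm
        simp only [Set.mem_setOf_eq, efun_left, le_refl]
      · by_cases hwm1 : w = u (m+1)
        · subst hwm1
          simp only [Set.mem_setOf_eq, efun_right, le_refl]
        · exact le_of_lt (hFlt m w hw hwm hwm1)
    rw [hP] at hy
    exact convexHull_min hgen hconv hy
  -- each consecutive pair spans an exposed segment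
  have hexp : ∀ m : ℤ, IsExposed ℝ P (segment ℝ (toR3 (u m)) (toR3 (u (m+1)))) := by
    intro m _hne
    refine ⟨efun (toR3 (u m)) (toR3 (u (m+1))), ?_⟩
    set x := toR3 (u m) with hx
    set z := toR3 (u (m+1)) with hz
    set dd := Dr x z with hdd
    set Φ := efun x z with hΦ
    have hxz : x ≠ z := by
      intro hc
      exact hne_close m (m+1) (by omega) (by omega) (by omega) (toR3_inj hc)
    ext y
    constructor
    · rintro ⟨a, b, ha, hb, hab, rfl⟩
      refine ⟨hPconv.segment_subset (hsubP _ (huV m)) (hsubP _ (huV (m+1)))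
        ⟨a, b, ha, hb, hab, rfl⟩, ?_⟩
      intro y' hy'
      have h1 := hPle m y' hy'
      have h2 : Φ (a • x + b • z) = dd := by
        rw [hΦ, map_add, map_smul, map_smul, smul_eq_mul, smul_eq_mul, efun_left, efun_right,
          ← hdd]
        have : a * dd + b * dd = (a + b) * dd := by ring
        rw [this, hab, one_mul]
      rw [h2]
      exact h1
    · rintro ⟨hyP, hymax⟩
      have h2 : Φ y = dd := by
        apply le_antisymm (hPle m y hyP)
        have h3 := hymax x (hsubP _ (huV m))
        calc dd = Φ x := (efun_left x z).symm
        _ ≤ Φ y := h3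
      have hyP' := hyP
      rw [hP] at hyP'
      have himg : toR3 '' (V : Set Z2) = ↑(V.image toR3) := (Finset.coe_image).symm
      rw [himg, Finset.convexHull_eq] at hyP'
      obtain ⟨wgt, hwgt0, hwgt1, hcm⟩ := hyP'
      rw [Finset.centerMass_eq_of_sum_1 _ id hwgt1] at hcm
      simp only [id_eq] at hcm
      have hΦy : ∑ q ∈ V.image toR3, wgt q * Φ q = dd := by
        rw [← h2, ← hcm, map_sum]
        apply Finset.sum_congr rfl
        intro q hq
        rw [map_smul, smul_eq_mul]
      have hzero : ∀ q ∈ V.image toR3, q ≠ x → q ≠ z → wgt q = 0 := by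
        intro q hq hq1 hq2
        obtain ⟨w, hwV, rfl⟩ := Finset.mem_image.mp hq
        by_contra h0
        have hqpos : 0 < wgt (toR3 w) := lt_of_le_of_ne (hwgt0 _ hq) (Ne.symm h0)
        have hwm : w ≠ u m := fun hc => hq1 (by rw [hc])
        have hwm1 : w ≠ u (m+1) := fun hc => hq2 (by rw [hc])
        have hstrict := hFlt m w hwV hwm hwm1
        have hlt : ∑ q ∈ V.image toR3, wgt q * Φ q < ∑ q ∈ V.image toR3, wgt q * dd := by
          apply Finset.sum_lt_sum
          · intro q' hq'
            obtain ⟨w', hw'V, rfl⟩ := Finset.mem_image.mp hq'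
            exact mul_le_mul_of_nonneg_left (hPle m (toR3 w') (hsubP _ hw'V)) (hwgt0 _ hq')
          · exact ⟨toR3 w, hq, mul_lt_mul_of_pos_left hstrict hqpos⟩
        rw [hΦy] at hlt
        rw [← Finset.sum_mul, hwgt1, one_mul] at hlt
        exact lt_irrefl _ hlt
      have hxW : x ∈ V.image toR3 := Finset.mem_image_of_mem _ (huV m)
      have hzW : z ∈ V.image toR3 := Finset.mem_image_of_mem _ (huV (m+1))
      have hsub : ({x, z} : Finset R2) ⊆ V.image toR3 := by
        rw [Finset.insert_subset_iff, Finset.singleton_subset_iff]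
        exact ⟨hxW, hzW⟩
      have hout : ∀ q ∈ V.image toR3, q ∉ ({x, z} : Finset R2) → wgt q = 0 := by
        intro q hq hnq
        simp only [Finset.mem_insert, Finset.mem_singleton] at hnq
        push_neg at hnq
        exact hzero q hq hnq.1 hnq.2
      have hseq : ∑ q ∈ V.image toR3, wgt q • q = ∑ q ∈ ({x, z} : Finset R2), wgt q • q := by
        symm
        apply Finset.sum_subset hsub
        intro q hq hnq
        rw [hout q hq hnq, zero_smul]
      have hwsum : ∑ q ∈ ({x, z} : Finset R2), wgt q = 1 := by
        rw [← hwgt1]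
        symm
        symm
        apply Finset.sum_subset hsub
        intro q hq hnq
        exact hout q hq hnq
      rw [hseq, Finset.sum_pair hxz] at hcm
      rw [Finset.sum_pair hxz] at hwsum
      exact ⟨wgt x, wgt z, hwgt0 _ hxW, hwgt0 _ hzW, hwsum, hcm⟩
  -- every consecutive determinant equals one
  have hD : ∀ m, D (u m) (u (m+1)) = 1 := by
    intro m
    have hneuv : u m ≠ u (m+1) := hne_close m (m+1) (by omega) (by omega) (by omega)
    have hspan := hedge (u m) (u (m+1)) (huV m) (huV (m+1)) hneuv (hexp m)
    have h1 : (![1, 0] : Z2) ∈ Submodule.span ℤ {u m, u (m+1)} := by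
      rw [hspan]
      trivial
    have h2 : (![0, 1] : Z2) ∈ Submodule.span ℤ {u m, u (m+1)} := by
      rw [hspan]
      trivial
    rw [Submodule.mem_span_pair] at h1 h2
    obtain ⟨a, b, hab⟩ := h1
    obtain ⟨c, d, hcd⟩ := h2
    have hmul : (a * d - b * c) * D (u m) (u (m+1)) = 1 := by
      rw [← D_expand, hab, hcd, D_e01]
    have hdvd : D (u m) (u (m+1)) ∣ 1 := Dvd.intro_left _ hmul
    have hunit := Int.isUnit_iff.mp (isUnit_of_dvd_one hdvd)
    have hpos := hDpos m
    omega
  -- wrap up via the core counting theorem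
  have hcore := core n hn3 u 0 hPer hD hSw hVcore
  have h1 := Finset.sum_le_card_nsmul (Finset.Ico (0:ℤ) (0 + (n:ℤ))) (aseq u) 1
    (fun k _ => a_le_one (t := 0) hn3 hPer hD hSw hVcore k)
  rw [Int.card_Ico, nsmul_eq_mul, mul_one] at h1
  rw [hcore] at h1
  have h2 : ((0 + (n:ℤ) - 0).toNat : ℤ) = (n:ℤ) := by omega
  rw [h2] at h1
  have h3 : n ≤ 6 := by exact_mod_cast (by linarith : (n:ℤ) ≤ 6)
  omega

end SF

/-- Every 2-dimensional smooth Fano polytope has at most 6 vertices.  Here `V` is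
the vertex set of the lattice polygon `P = convexHull (V : ℝ²)`: the origin lies in
the interior of `P`, the dual polytope of `P` is a lattice polytope, and the two
vertices of each edge (exposed segment) of `P` form a `ℤ`-basis of `ℤ²`. -/
theorem stmt_3 (V : Finset (Fin 2 → ℤ)) (P : Set (Fin 2 → ℝ))
    (hP : P = convexHull ℝ (toR3 '' (V : Set (Fin 2 → ℤ))))
    (hvert : ∀ v ∈ V, toR3 v ∉ convexHull ℝ (toR3 '' ((V.erase v : Finset (Fin 2 → ℤ)) : Set (Fin 2 → ℤ))))
    (hint : (0 : Fin 2 → ℝ) ∈ interior P)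
    (hdual : ∃ S : Finset (Fin 2 → ℝ), (∀ v ∈ S, IsLatticePoint3 v) ∧
      dualPolytope3 P = convexHull ℝ (S : Set (Fin 2 → ℝ)))
    (hedge : ∀ u v : Fin 2 → ℤ, u ∈ V → v ∈ V → u ≠ v →
      IsExposed ℝ P (segment ℝ (toR3 u) (toR3 v)) → IsZBasis3 u v) :
    V.card ≤ 6 := by
  apply SF.main_theorem V P hP hvert hint
  intro u v hu hv huv hexp
  exact (hedge u v hu hv huv hexp).2
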